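/- Let k, ℓ be integers with b_1 = ℓ, b_2 = (k+ℓ)^2 - k, b_3, b_4, b_5 defined by b_3 = a_3 - b_2 + ℓ a_1 and b_n = (k+ℓ-2) b_{n-1} + (k+2ℓ-1) b_{n-2} + ℓ b_{n-3}, where a_1 = k+ℓ, a_2 = (k+ℓ)^2 - k, a_n = (k+ℓ-1) a_{n-1} + ℓ a_{n-2}. Then the determinant of the 3×3 matrix B with rows (b_3, b_2, b_1), (b_4, b_3, b_2), (b_5, b_4, b_3) equals -k^2 (k-1) ℓ ((k+ℓ-1)^2 + 4ℓ). -/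

import Mathlib

theorem det_B (k ℓ : ℤ) (a b : ℕ → ℤ)
    (ha1 : a 1 = k + ℓ) (ha2 : a 2 = (k + ℓ) ^ 2 - k)
    (ha : ∀ n ≥ 3, a n = (k + ℓ - 1) * a (n - 1) + ℓ * a (n - 2))
    (hb1 : b 1 = ℓ) (hb2 : b 2 = (k + ℓ) ^ 2 - k)
    (hb3 : b 3 = a 3 - b 2 + ℓ * a 1)
    (hb : ∀ n ≥ 4, b n = (k + ℓ - 2) * b (n - 1) + (k + 2 * ℓ - 1) * b (n - 2) + ℓ * b (n - 3)) :
    Matrix.det !![b 3, b 2, b 1; b 4, b 3, b 2; b 5, b 4, b 3] =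
      -k ^ 2 * (k - 1) * ℓ * ((k + ℓ - 1) ^ 2 + 4 * ℓ) := by
  have ha3 := ha 3 (by norm_num)
  have hb4 := hb 4 (by norm_num)
  have hb5 := hb 5 (by norm_num)
  norm_num at ha3 hb4 hb5
  rw [Matrix.det_fin_three]
  norm_num [Matrix.cons_val_one, Matrix.cons_val_zero, Matrix.cons_val_two, Matrix.cons_val]
  rw [hb5, hb4, hb3, ha3, hb2, hb1, ha2, ha1]
  ring
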